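/- Fix n : ℕ and write E = EuclideanSpace ℝ (Fin n). Let f : E → E be continuously differentiable (ContDiff ℝ 1 f) with f 0 = 0. Define H : ℝ × E → E by H(t, x) = t⁻¹ • f (t • x) for t ≠ 0 and H(0, x) = (fderiv ℝ f 0) x. Then H is continuous (jointly in (t, x)); in particular, as t → 0, the rescalings x ↦ t⁻¹ • f(t • x) converge to the derivative fderiv ℝ f 0 uniformly on compact subsets of E. -/

import Mathlib

/-!  STATEMENT 3: For a C¹ map `f : ℝⁿ → ℝⁿ` with `f 0 = 0`, the family of rescalings
`(t, x) ↦ t⁻¹ • f (t • x)` (for `t ≠ 0`), extended at `t = 0` by the derivative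
`x ↦ (fderiv ℝ f 0) x`, is jointly continuous. -/

theorem continuous_rescaling_to_derivative (n : ℕ)
    (f : EuclideanSpace ℝ (Fin n) → EuclideanSpace ℝ (Fin n))
    (hf : ContDiff ℝ 1 f) (hf0 : f 0 = 0)
    (H : ℝ × EuclideanSpace ℝ (Fin n) → EuclideanSpace ℝ (Fin n))
    (hH0 : ∀ x, H (0, x) = (fderiv ℝ f 0) x)
    (hHt : ∀ t : ℝ, t ≠ 0 → ∀ x, H (t, x) = t⁻¹ • f (t • x)) :
    Continuous H := by
  have hdiff : Differentiable ℝ f := hf.differentiable one_ne_zero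
  have hcont : Continuous (fun y => fderiv ℝ f y) := hf.continuous_fderiv one_ne_zero
  -- integral representation
  have key : ∀ p : ℝ × EuclideanSpace ℝ (Fin n),
      H p = ∫ s in (0:ℝ)..1, fderiv ℝ f (s • p.1 • p.2) p.2 := by
    rintro ⟨t, x⟩
    rcases eq_or_ne t 0 with rfl | ht
    · simp [hH0 x]
    · -- FTC for g s = f (s • (t • x))
      have hFTC : ∫ s in (0:ℝ)..1, fderiv ℝ f (s • t • x) (t • x)
          = f ((1:ℝ) • t • x) - f ((0:ℝ) • t • x) := by
        apply intervalIntegral.integral_eq_sub_of_hasDerivAt (f := fun s : ℝ => f (s • t • x))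
        · intro s _
          have h1 : HasDerivAt (fun s : ℝ => s • t • x) ((1:ℝ) • t • x) s :=
            (hasDerivAt_id s).smul_const (t • x)
          rw [one_smul] at h1
          exact (hdiff (s • t • x)).hasFDerivAt.comp_hasDerivAt s h1
        · apply Continuous.intervalIntegrable
          exact (hcont.comp (continuous_id.smul continuous_const)).clm_apply
            continuous_const
      have : f (t • x) = ∫ s in (0:ℝ)..1, fderiv ℝ f (s • t • x) (t • x) := by
        rw [hFTC]; simp [hf0]
      rw [hHt t ht x, this, ← intervalIntegral.integral_smul]
      congr 1
      ext s
      rw [map_smul, smul_smul, inv_mul_cancel₀ ht, one_smul]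
  have : Continuous fun p : ℝ × EuclideanSpace ℝ (Fin n) =>
      ∫ s in (0:ℝ)..1, fderiv ℝ f (s • p.1 • p.2) p.2 := by
    apply intervalIntegral.continuous_parametric_intervalIntegral_of_continuous'
    exact (hcont.comp ((continuous_snd.smul
      ((continuous_fst.comp continuous_fst).smul
        (continuous_snd.comp continuous_fst))))).clm_apply
      (continuous_snd.comp continuous_fst)
  exact (funext key) ▸ this
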